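/- Let Q ∈ ℤ[x] be a monic polynomial of degree 6 that is irreducible over ℚ, and let λ₁ ≠ λ₂ be two real roots of Q. Set f₁ = (1, λ₁, λ₁², λ₁³, λ₁⁴, λ₁⁵) and f₂ = (1, λ₂, λ₂², λ₂³, λ₂⁴, λ₂⁵) in ℝ⁶. Then there is no nonzero integer vector r ∈ ℤ⁶ with ⟨r, f₁⟩ = 0 and ⟨r, f₂⟩ = 0, and consequently the set { t₁f₁ + t₂f₂ − p : t₁, t₂ ∈ ℝ, p ∈ ℤ⁶ } is dense in ℝ⁶ (equivalently, the projection of the plane spanned by f₁, f₂ is dense in the torus T⁶ = ℝ⁶/ℤ⁶). -/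

import Mathlib

open Matrix Polynomial
open scoped Classical

noncomputable section

/-- The `n`-torus `ℝⁿ/ℤⁿ`, realized as `Fin n → ℝ/ℤ`. -/
abbrev Torus (n : ℕ) := Fin n → AddCircle (1 : ℝ)

/-- The projection `p : ℝⁿ → Tⁿ`. -/
def torusProj (n : ℕ) (x : Fin n → ℝ) : Torus n := fun i => (x i : AddCircle (1 : ℝ))

/-- The linear action of an integer matrix on `ℝⁿ`. -/
def realMulVec {n : ℕ} (A : Matrix (Fin n) (Fin n) ℤ) (x : Fin n → ℝ) : Fin n → ℝ :=
  (A.map (Int.cast : ℤ → ℝ)).mulVec x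

/-- The complex eigenvalues (with multiplicity) of an integer matrix. -/
def eigsC {n : ℕ} (A : Matrix (Fin n) (Fin n) ℤ) : Multiset ℂ :=
  ((A.map (Int.cast : ℤ → ℂ)).charpoly).roots

/-- A complex number is a root of unity if some positive power of it is `1`. -/
def IsRootOfUnity (z : ℂ) : Prop := ∃ k : ℕ, 1 ≤ k ∧ z ^ k = 1
theorem no_small_relation (Q : Polynomial ℤ) (hmonic : Q.Monic) (hdeg : Q.natDegree = 6)
    (hirr : Irreducible (Q.map (Int.castRingHom ℚ))) (l : ℝ)
    (h : (Q.map (Int.castRingHom ℝ)).IsRoot l) (r : Fin 6 → ℤ) (hr : r ≠ 0)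
    (hsum : (∑ j, (r j : ℝ) * l ^ (j : ℕ)) = 0) : False := by
  classical
  have hQQmonic : (Q.map (Int.castRingHom ℚ)).Monic := hmonic.map _
  have haev : Polynomial.aeval l (Q.map (Int.castRingHom ℚ)) = 0 := by
    rw [Polynomial.aeval_def, ← Polynomial.eval_map, Polynomial.map_map]
    have hcomp : (algebraMap ℚ ℝ).comp (Int.castRingHom ℚ) = Int.castRingHom ℝ :=
      Subsingleton.elim _ _
    rw [hcomp]
    exact h
  have hintl : IsIntegral ℚ l := ⟨Q.map (Int.castRingHom ℚ), hQQmonic, by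
    rwa [← Polynomial.aeval_def]⟩
  have hdvdQ : minpoly ℚ l ∣ Q.map (Int.castRingHom ℚ) := minpoly.dvd ℚ l haev
  have hQdeg : (Q.map (Int.castRingHom ℚ)).natDegree = 6 := by
    rw [hmonic.natDegree_map]; exact hdeg
  have hmindeg : (minpoly ℚ l).natDegree = 6 := by
    obtain ⟨c, hc⟩ := hdvdQ
    rcases hirr.isUnit_or_isUnit hc with hu | hu
    · exact absurd hu (minpoly.not_isUnit ℚ l)
    · have hcdeg : c.natDegree = 0 := Polynomial.natDegree_eq_zero_of_isUnit hu
      have hm0 : minpoly ℚ l ≠ 0 := minpoly.ne_zero hintl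
      have hc0 : c ≠ 0 := hu.ne_zero
      rw [hc, Polynomial.natDegree_mul hm0 hc0, hcdeg, add_zero] at hQdeg
      exact hQdeg
  set R : Polynomial ℚ := ∑ j : Fin 6, Polynomial.C ((r j : ℚ)) * Polynomial.X ^ (j : ℕ) with hR
  have hRaev : Polynomial.aeval l R = 0 := by
    rw [hR, map_sum]
    simp only [_root_.map_mul, Polynomial.aeval_C, map_pow, Polynomial.aeval_X, eq_ratCast,
      Rat.cast_intCast]
    exact hsum
  have hRne : R ≠ 0 := by
    obtain ⟨j, hj⟩ := Function.ne_iff.mp hr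
    intro h0
    have hcoeff : R.coeff (j : ℕ) = (r j : ℚ) := by
      rw [hR, Polynomial.finset_sum_coeff]
      simp only [Polynomial.coeff_C_mul, Polynomial.coeff_X_pow]
      rw [Finset.sum_eq_single j
        (fun b _ hb => by rw [if_neg (fun hh => hb (Fin.ext hh.symm)), mul_zero])
        (fun hmem => absurd (Finset.mem_univ j) hmem)]
      rw [if_pos rfl, mul_one]
    rw [h0, Polynomial.coeff_zero] at hcoeff
    exact hj (by exact_mod_cast hcoeff.symm)
  have hle : (minpoly ℚ l).natDegree ≤ R.natDegree :=
    Polynomial.natDegree_le_of_dvd (minpoly.dvd ℚ l hRaev) hRne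
  have hRdeg : R.natDegree ≤ 5 := by
    rw [hR]
    refine Polynomial.natDegree_sum_le_of_forall_le _ _ (fun j _ => ?_)
    refine le_trans (Polynomial.natDegree_C_mul_le _ _) ?_
    simpa using Nat.lt_succ_iff.mp j.isLt
  omega

open Filter in
set_option maxHeartbeats 1000000 in
theorem exists_int_functional {n : ℕ} (H : AddSubgroup (Fin n → ℝ))
    (hcl : IsClosed (H : Set (Fin n → ℝ)))
    (hint : ∀ p : Fin n → ℤ, (fun j => (p j : ℝ)) ∈ H)
    (hne : (H : Set (Fin n → ℝ)) ≠ Set.univ) :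
    ∃ φ : (Fin n → ℝ) →ₗ[ℝ] ℝ, (∃ x, φ x = 1) ∧ (∀ x ∈ H, ∃ z : ℤ, φ x = z) ∧
      ∀ x : Fin n → ℝ, (∀ t : ℝ, t • x ∈ H) → φ x = 0 := by
  classical
  -- `W` is the largest linear subspace contained in `H`.
  set W : Submodule ℝ (Fin n → ℝ) :=
    { carrier := {x | ∀ t : ℝ, t • x ∈ H}
      add_mem' := fun hx hy t => by simpa [smul_add] using H.add_mem (hx t) (hy t)
      zero_mem' := fun t => by simpa using H.zero_mem
      smul_mem' := fun c x hx => fun t => by simpa [smul_smul] using hx (t * c) } with hWdef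
  have hWmem : ∀ x ∈ W, x ∈ H := fun x hx => by simpa using hx 1
  obtain ⟨W', hcompl⟩ := Submodule.exists_isCompl W
  set π : (Fin n → ℝ) →ₗ[ℝ] W' := W'.linearProjOfIsCompl W hcompl.symm with hπdef
  have hπW' : ∀ x : W', π (x : Fin n → ℝ) = x := fun x =>
    Submodule.linearProjOfIsCompl_apply_left hcompl.symm x
  have hπW : ∀ x ∈ W, π x = 0 := fun x hx =>
    Submodule.projectionOnto_apply_of_mem_right hcompl.symm hx
  have hsub : ∀ x : Fin n → ℝ, x - (π x : Fin n → ℝ) ∈ W := by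
    intro x
    rw [← Submodule.linearProjOfIsCompl_apply_eq_zero_iff (p := W') (q := W) hcompl.symm,
      map_sub]
    rw [show W'.projectionOnto W hcompl.symm ((π x : Fin n → ℝ)) = π x from hπW' (π x)]
    exact sub_self _
  set L : Submodule ℤ ↥W' := AddSubgroup.toIntSubmodule
    (H.comap W'.subtype.toAddMonoidHom) with hLdef
  have hLmem : ∀ x : ↥W', x ∈ L ↔ (x : Fin n → ℝ) ∈ H := fun x => Iff.rfl
  have hπH : ∀ x ∈ H, π x ∈ L := by
    intro x hx
    rw [hLmem]
    have hrw : (π x : Fin n → ℝ) = x - (x - (π x : Fin n → ℝ)) := by abel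
    rw [hrw]
    exact H.sub_mem hx (hWmem _ (hsub x))
  -- the standard basis vectors lie in `H`
  have he : ∀ i : Fin n, (fun j => if i = j then (1 : ℝ) else 0) ∈ H := by
    intro i
    have h1 := hint (Pi.single i 1)
    have h2 : (fun j => ((Pi.single i 1 : Fin n → ℤ) j : ℝ)) =
        fun j => if i = j then (1 : ℝ) else 0 := by
      funext j
      simp [Pi.single_apply, eq_comm, apply_ite (Int.cast : ℤ → ℝ)]
    rwa [h2] at h1
  -- `L` spans `W'`
  have hspan : Submodule.span ℝ (L : Set ↥W') = ⊤ := by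
    rw [Submodule.eq_top_iff']
    intro y
    have h1 : y = π (y : Fin n → ℝ) := (hπW' y).symm
    have hy : (y : Fin n → ℝ) =
        ∑ i, (y : Fin n → ℝ) i • fun j => if i = j then (1 : ℝ) else 0 := pi_eq_sum_univ _
    have h2 : π (y : Fin n → ℝ) =
        ∑ i, (y : Fin n → ℝ) i • π (fun j => if i = j then (1 : ℝ) else 0) := by
      conv_lhs => rw [hy]
      rw [map_sum]
      exact Finset.sum_congr rfl fun i _ => by rw [_root_.map_smul]
    rw [h1, h2]
    refine Submodule.sum_mem _ fun i _ => Submodule.smul_mem _ _ (Submodule.subset_span ?_)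
    exact hπH _ (he i)
  -- `L` is discrete
  have hsep : ∃ ε : ℝ, 0 < ε ∧ ∀ x : ↥W', x ∈ L → ‖(x : Fin n → ℝ)‖ < ε → x = 0 := by
    by_contra hcon
    push_neg at hcon
    choose d hdL hdlt hdne using fun k : ℕ => hcon (1 / (k + 1)) (by positivity)
    set v : ℕ → Fin n → ℝ := fun k => (d k : Fin n → ℝ) with hv
    have hvne : ∀ k, v k ≠ 0 := fun k h => hdne k (by exact_mod_cast Subtype.ext h)
    have hvnorm : ∀ k, 0 < ‖v k‖ := fun k => norm_pos_iff.mpr (hvne k)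
    set u : ℕ → Fin n → ℝ := fun k => ‖v k‖⁻¹ • v k with hu
    have hunorm : ∀ k, ‖u k‖ = 1 := fun k => by
      rw [hu]
      simp only [norm_smul, norm_inv, norm_norm]
      exact inv_mul_cancel₀ (hvnorm k).ne'
    have hW'closed : IsClosed (W' : Set (Fin n → ℝ)) := Submodule.closed_of_finiteDimensional W'
    have hs : IsCompact (Metric.sphere (0 : Fin n → ℝ) 1 ∩ (W' : Set (Fin n → ℝ))) :=
      (isCompact_sphere 0 1).inter_right hW'closed
    have hus : ∀ k, u k ∈ Metric.sphere (0 : Fin n → ℝ) 1 ∩ (W' : Set (Fin n → ℝ)) := fun k =>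
      ⟨by rw [mem_sphere_zero_iff_norm]; exact hunorm k, W'.smul_mem _ (d k).2⟩
    obtain ⟨u₀, hu₀, σ, hσ, hconv⟩ := hs.tendsto_subseq hus
    have hvlim : Tendsto (fun k => ‖v (σ k)‖) atTop (nhds 0) := by
      have h1 : Tendsto (fun k : ℕ => 1 / ((k : ℝ) + 1)) atTop (nhds 0) :=
        tendsto_one_div_add_atTop_nhds_zero_nat
      refine squeeze_zero (fun k => norm_nonneg _) (fun k => ?_) (h1.comp hσ.tendsto_atTop)
      simpa using (hdlt (σ k)).le
    have hu₀W : u₀ ∈ W := by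
      intro t
      set c : ℕ → ℤ := fun k => ⌊t / ‖v k‖⌋ with hc
      have hckey : ∀ k, ((c k : ℝ) * ‖v k‖) • u k = (c k : ℝ) • v k := fun k => by
        show ((c k : ℝ) * ‖v k‖) • (‖v k‖⁻¹ • v k) = (c k : ℝ) • v k
        rw [smul_smul, mul_assoc, mul_inv_cancel₀ (hvnorm k).ne', mul_one]
      have hdist : ∀ k, ‖(c k : ℝ) * ‖v k‖ - t‖ ≤ ‖v k‖ := by
        intro k
        have h1 : ((c k : ℝ)) * ‖v k‖ ≤ t := (le_div_iff₀ (hvnorm k)).mp (Int.floor_le _)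
        have h2 : t < ((c k : ℝ) + 1) * ‖v k‖ := (div_lt_iff₀ (hvnorm k)).mp
          (Int.lt_floor_add_one _)
        rw [Real.norm_eq_abs, abs_le]
        constructor <;> nlinarith [hvnorm k]
      have hlim2 : Tendsto (fun k => ((c (σ k) : ℝ) * ‖v (σ k)‖)) atTop (nhds t) := by
        have h0 : Tendsto (fun k => ((c (σ k) : ℝ) * ‖v (σ k)‖ - t)) atTop (nhds 0) :=
          squeeze_zero_norm (fun k => hdist (σ k)) hvlim
        simpa using h0.add_const t
      have hlim3 : Tendsto (fun k => ((c (σ k) : ℝ) * ‖v (σ k)‖) • u (σ k)) atTop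
          (nhds (t • u₀)) := hlim2.smul hconv
      refine hcl.mem_of_tendsto hlim3 (Filter.Eventually.of_forall fun k => ?_)
      rw [hckey]
      have hvH : v (σ k) ∈ H := (hLmem _).mp (hdL (σ k))
      have : (c (σ k)) • v (σ k) ∈ H := AddSubgroup.zsmul_mem H hvH _
      rwa [← Int.cast_smul_eq_zsmul ℝ] at this
    have hu₀0 : u₀ = 0 := Submodule.disjoint_def.mp hcompl.disjoint u₀ hu₀W hu₀.2
    have := hu₀.1
    rw [hu₀0, mem_sphere_zero_iff_norm] at this
    simp at this
  obtain ⟨ε, hε, hsepε⟩ := hsep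
  haveI hdiscL : DiscreteTopology ↥L := by
    rw [discreteTopology_iff_isOpen_singleton_zero, isOpen_induced_iff]
    refine ⟨Metric.ball 0 ε, Metric.isOpen_ball, ?_⟩
    ext x
    simp only [Set.mem_preimage, Metric.mem_ball, dist_zero_right, Set.mem_singleton_iff]
    constructor
    · intro hx
      exact Subtype.ext (hsepε x.1 x.2 hx)
    · intro hx
      rw [hx]
      simpa using hε
  haveI : IsZLattice ℝ L := ⟨hspan⟩
  haveI : Module.Finite ℤ ↥L := ZLattice.module_finite ℝ L
  haveI : Module.Free ℤ ↥L := ZLattice.module_free ℝ L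
  have hW'ne : W' ≠ ⊥ := by
    intro hbot
    apply hne
    rw [Set.eq_univ_iff_forall]
    intro x
    refine hWmem x ?_
    have htop : W = ⊤ := by
      have := codisjoint_iff.mp hcompl.codisjoint
      rwa [hbot, sup_bot_eq] at this
    rw [htop]; trivial
  have hrankpos : 0 < Module.finrank ℝ ↥W' := by
    rcases Nat.eq_zero_or_pos (Module.finrank ℝ ↥W') with h0 | h
    · exact absurd (Submodule.finrank_eq_zero.mp h0) hW'ne
    · exact h
  haveI hne' : Nonempty (Module.Free.ChooseBasisIndex ℤ ↥L) := by
    rw [← Fintype.card_pos_iff, ← Module.finrank_eq_card_chooseBasisIndex,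
      ZLattice.rank ℝ L]
    exact hrankpos
  set b := Module.Free.chooseBasis ℤ ↥L with hb
  set i₀ : Module.Free.ChooseBasisIndex ℤ ↥L := Classical.arbitrary _ with hi₀
  set B := b.ofZLatticeBasis ℝ L with hB
  refine ⟨(B.coord i₀).comp π, ⟨(B i₀ : Fin n → ℝ), ?_⟩, ?_, ?_⟩
  · rw [LinearMap.comp_apply, hπW' (B i₀)]
    simp [Module.Basis.coord_apply]
  · intro x hx
    refine ⟨b.repr (⟨π x, hπH x hx⟩ : L) i₀, ?_⟩
    rw [LinearMap.comp_apply, Module.Basis.coord_apply]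
    have h5 := Module.Basis.ofZLatticeBasis_repr_apply (K := ℝ) (L := L) b (⟨π x, hπH x hx⟩ : L) i₀
    rw [← hB] at h5
    exact h5
  · intro x hx
    rw [LinearMap.comp_apply, hπW x hx, map_zero]

/-- For two distinct real roots `λ₁ ≠ λ₂` of a monic irreducible sextic over `ℚ`, no nonzero
integer vector is orthogonal to both `(1, λᵢ, …, λᵢ⁵)`; consequently the plane they span is
dense modulo `ℤ⁶` (equivalently, its projection to the torus `T⁶` is dense). -/
theorem no_resonance_real_roots (Q : Polynomial ℤ) (hmonic : Q.Monic) (hdeg : Q.natDegree = 6)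
    (hirr : Irreducible (Q.map (Int.castRingHom ℚ)))
    (l₁ l₂ : ℝ) (hne : l₁ ≠ l₂)
    (h₁ : (Q.map (Int.castRingHom ℝ)).IsRoot l₁)
    (h₂ : (Q.map (Int.castRingHom ℝ)).IsRoot l₂) :
    (¬∃ r : Fin 6 → ℤ, r ≠ 0 ∧ (∑ j, (r j : ℝ) * l₁ ^ (j : ℕ)) = 0 ∧
        (∑ j, (r j : ℝ) * l₂ ^ (j : ℕ)) = 0) ∧
    Dense {x : Fin 6 → ℝ | ∃ (t₁ t₂ : ℝ) (p : Fin 6 → ℤ),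
        x = (t₁ • fun j : Fin 6 => l₁ ^ (j : ℕ)) + (t₂ • fun j : Fin 6 => l₂ ^ (j : ℕ))
          - fun j => (p j : ℝ)} ∧
    Dense (torusProj 6 ''
      ((Submodule.span ℝ {(fun j : Fin 6 => l₁ ^ (j : ℕ)), (fun j : Fin 6 => l₂ ^ (j : ℕ))} :
        Submodule ℝ (Fin 6 → ℝ)) : Set (Fin 6 → ℝ))) := by
  classical
  set f₁ : Fin 6 → ℝ := fun j : Fin 6 => l₁ ^ (j : ℕ) with hf₁
  set f₂ : Fin 6 → ℝ := fun j : Fin 6 => l₂ ^ (j : ℕ) with hf₂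
  set S : Set (Fin 6 → ℝ) := {x : Fin 6 → ℝ | ∃ (t₁ t₂ : ℝ) (p : Fin 6 → ℤ),
      x = (t₁ • f₁) + (t₂ • f₂) - fun j => (p j : ℝ)} with hS
  have P1 : ¬∃ r : Fin 6 → ℤ, r ≠ 0 ∧ (∑ j, (r j : ℝ) * l₁ ^ (j : ℕ)) = 0 ∧
      (∑ j, (r j : ℝ) * l₂ ^ (j : ℕ)) = 0 := by
    rintro ⟨r, hr, hs1, -⟩
    exact no_small_relation Q hmonic hdeg hirr l₁ h₁ r hr hs1
  have hS2 : Dense S := by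
    by_contra hnd
    set G : AddSubgroup (Fin 6 → ℝ) :=
      { carrier := S
        add_mem' := by
          rintro x y ⟨a, b, p, rfl⟩ ⟨c, d, q, rfl⟩
          refine ⟨a + c, b + d, p + q, ?_⟩
          funext j
          simp only [Pi.add_apply, Pi.sub_apply, Pi.smul_apply, smul_eq_mul, Pi.intCast_apply]
          push_cast
          ring
        zero_mem' := ⟨0, 0, 0, by funext j; simp⟩
        neg_mem' := by
          rintro x ⟨a, b, p, rfl⟩
          refine ⟨-a, -b, -p, ?_⟩
          funext j
          simp only [Pi.neg_apply, Pi.add_apply, Pi.sub_apply, Pi.smul_apply, smul_eq_mul,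
            Pi.intCast_apply]
          push_cast
          ring } with hG
    set H := G.topologicalClosure with hH
    have hcl : IsClosed (H : Set (Fin 6 → ℝ)) := G.isClosed_topologicalClosure
    have hSsubH : S ⊆ (H : Set (Fin 6 → ℝ)) := subset_closure
    have hint : ∀ p : Fin 6 → ℤ, (fun j => (p j : ℝ)) ∈ H := by
      intro p
      refine hSsubH ⟨0, 0, -p, ?_⟩
      funext j
      simp
    have hneH : (H : Set (Fin 6 → ℝ)) ≠ Set.univ := by
      intro hu
      exact hnd (by rw [dense_iff_closure_eq]; exact hu)
    obtain ⟨φ, ⟨x₀, hx₀⟩, hZ, hvanish⟩ := exists_int_functional H hcl hint hneH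
    have heH : ∀ i : Fin 6, (fun j => if i = j then (1 : ℝ) else 0) ∈ H := by
      intro i
      have h1 := hint (Pi.single i 1)
      have h2 : (fun j => ((Pi.single i 1 : Fin 6 → ℤ) j : ℝ)) =
          fun j => if i = j then (1 : ℝ) else 0 := by
        funext j
        simp [Pi.single_apply, eq_comm, apply_ite (Int.cast : ℤ → ℝ)]
      rwa [h2] at h1
    choose r hrz using fun i : Fin 6 => hZ _ (heH i)
    have hφ : ∀ x : Fin 6 → ℝ, φ x = ∑ i, x i * (r i : ℝ) := by
      intro x
      rw [LinearMap.pi_apply_eq_sum_univ φ x]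
      exact Finset.sum_congr rfl fun i _ => by rw [hrz i, smul_eq_mul]
    have hr0 : r ≠ 0 := by
      intro h0
      rw [hφ x₀] at hx₀
      simp [h0] at hx₀
    have hφf₁ : φ f₁ = 0 := by
      refine hvanish f₁ fun t => hSsubH ⟨t, 0, 0, ?_⟩
      funext j
      simp
    have hφf₂ : φ f₂ = 0 := by
      refine hvanish f₂ fun t => hSsubH ⟨0, t, 0, ?_⟩
      funext j
      simp
    refine P1 ⟨r, hr0, ?_, ?_⟩
    · rw [← hφf₁, hφ f₁]
      exact Finset.sum_congr rfl fun i _ => by rw [hf₁, mul_comm]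
    · rw [← hφf₂, hφ f₂]
      exact Finset.sum_congr rfl fun i _ => by rw [hf₂, mul_comm]
  refine ⟨P1, hS2, ?_⟩
  -- density in the torus
  have hcont : Continuous (torusProj 6) := by
    refine continuous_pi fun i => ?_
    exact continuous_quotient_mk'.comp (continuous_apply i)
  have hsurj : Function.Surjective (torusProj 6) := by
    intro y
    refine ⟨fun i => (y i).out, ?_⟩
    funext i
    exact QuotientAddGroup.out_eq' (y i)
  set V : Submodule ℝ (Fin 6 → ℝ) := Submodule.span ℝ {f₁, f₂} with hV
  have h1 : torusProj 6 '' S ⊆ torusProj 6 '' (V : Set (Fin 6 → ℝ)) := by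
    rintro _ ⟨x, ⟨t₁, t₂, p, rfl⟩, rfl⟩
    refine ⟨t₁ • f₁ + t₂ • f₂, ?_, ?_⟩
    · exact Submodule.add_mem _
        (Submodule.smul_mem _ _ (Submodule.subset_span (Set.mem_insert _ _)))
        (Submodule.smul_mem _ _ (Submodule.subset_span (Set.mem_insert_of_mem _ rfl)))
    · funext i
      show ((t₁ • f₁ + t₂ • f₂) i : AddCircle (1 : ℝ)) =
        (((t₁ • f₁ + t₂ • f₂ - fun j => ((p j : ℝ))) i : ℝ) : AddCircle (1 : ℝ))
      rw [Pi.sub_apply]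
      rw [show (((t₁ • f₁ + t₂ • f₂) i - ((p i : ℝ)) : ℝ) : AddCircle (1 : ℝ)) =
        (((t₁ • f₁ + t₂ • f₂) i : ℝ) : AddCircle (1 : ℝ)) - (((p i : ℝ)) : AddCircle (1 : ℝ))
        from QuotientAddGroup.mk_sub _ _ _]
      rw [show (((p i : ℝ)) : AddCircle (1 : ℝ)) = 0 from
        (AddCircle.coe_eq_zero_iff _).mpr ⟨p i, by simp⟩, sub_zero]
  have h2 : Dense (torusProj 6 '' S) := by
    rw [dense_iff_closure_eq]
    apply Set.eq_univ_of_univ_subset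
    have h3 := image_closure_subset_closure_image (s := S) hcont
    rw [hS2.closure_eq, Set.image_univ, Set.range_eq_univ.mpr hsurj] at h3
    exact h3
  exact h2.mono h1
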